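/- Let X be a finite subset of an abelian group G, P a p-subgroup and H a p'-subgroup with G = P × H. Suppose λ = |X ∩ Hx| is the same for all x ∈ X and μ = |X ∩ Px| is the same for all x ∈ X, the projection X_P of X to P has p-power size, and the projection X_H of X to H has size coprime to p. Then X = X_P × X_H. -/

import Mathlib

open scoped Pointwise

/-- Fiber counting: if every fiber of `f` over a point of `X` has `lam`
elements, then `|X| = lam * |f '' X|`. -/
lemma count_aux {G : Type*} [Fintype G] (X : Set G) (f : G → G) (lam : ℕ)
    (hfib : ∀ x ∈ X, {y ∈ X | f y = f x}.ncard = lam) :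
    X.ncard = lam * (f '' X).ncard := by
  classical
  have hX : X.Finite := Set.toFinite X
  have hXf : (f '' X).Finite := hX.image f
  rw [Set.ncard_eq_toFinset_card X hX, Set.ncard_eq_toFinset_card _ hXf]
  rw [Finset.card_eq_sum_card_fiberwise
    (f := f) (t := hXf.toFinset) (fun x hx => by
      simp only [Finset.mem_coe, Set.Finite.mem_toFinset] at hx ⊢
      exact ⟨x, hx, rfl⟩)]
  rw [Finset.sum_congr rfl (fun b hb => ?_), Finset.sum_const, smul_eq_mul,
    mul_comm]
  · simp only [Set.Finite.mem_toFinset] at hb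
    obtain ⟨x, hxX, rfl⟩ := hb
    have hset : ((hX.toFinset.filter fun y => f y = f x : Finset G) : Set G)
        = {y ∈ X | f y = f x} := by
      ext y
      simp only [Finset.coe_filter, Set.Finite.mem_toFinset, Set.mem_setOf_eq]
    calc (hX.toFinset.filter fun y => f y = f x).card
        = ((hX.toFinset.filter fun y => f y = f x : Finset G) : Set G).ncard := by
          rw [Set.ncard_coe_finset]
      _ = {y ∈ X | f y = f x}.ncard := by rw [hset]
      _ = lam := hfib x hxX

theorem proj_tensor {p : ℕ} (hp : p.Prime) {G : Type*} [CommGroup G] [Fintype G]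
    (P H : Subgroup G) (hP : IsPGroup p P) (hH : ¬ p ∣ Nat.card H)
    (hdisj : P ⊓ H = ⊥) (hsup : P ⊔ H = ⊤)
    (X : Set G) (lam mu : ℕ)
    (hlam : ∀ x ∈ X, {y ∈ X | y * x⁻¹ ∈ H}.ncard = lam)
    (hmu : ∀ x ∈ X, {y ∈ X | y * x⁻¹ ∈ P}.ncard = mu)
    (hXP : ∃ k : ℕ, {u : G | u ∈ P ∧ ∃ v ∈ H, u * v ∈ X}.ncard = p ^ k)
    (hXH : ({v : G | v ∈ H ∧ ∃ u ∈ P, u * v ∈ X}.ncard).Coprime p) :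
    X = {u : G | u ∈ P ∧ ∃ v ∈ H, u * v ∈ X} *
        {v : G | v ∈ H ∧ ∃ u ∈ P, u * v ∈ X} := by
  classical
  set XP : Set G := {u : G | u ∈ P ∧ ∃ v ∈ H, u * v ∈ X} with hXPdef
  set XH : Set G := {v : G | v ∈ H ∧ ∃ u ∈ P, u * v ∈ X} with hXHdef
  -- decomposition functions
  choose uf hufP vf hvfH hmul using
    fun g : G => Subgroup.mem_sup.mp (hsup ▸ Subgroup.mem_top g)
  -- uniqueness of decomposition
  have huniq : ∀ u v u' v' : G, u ∈ P → v ∈ H → u' ∈ P → v' ∈ H →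
      u * v = u' * v' → u = u' ∧ v = v' := by
    intro u v u' v' hu hv hu' hv' heq
    have h1 : u'⁻¹ * u = v' * v⁻¹ := by
      calc u'⁻¹ * u = u'⁻¹ * (u * v) * v⁻¹ := by group
        _ = u'⁻¹ * (u' * v') * v⁻¹ := by rw [heq]
        _ = v' * v⁻¹ := by group
    have hmem : u'⁻¹ * u ∈ P ⊓ H := by
      refine ⟨P.mul_mem (P.inv_mem hu') hu, ?_⟩
      rw [h1]; exact H.mul_mem hv' (H.inv_mem hv)
    rw [hdisj, Subgroup.mem_bot] at hmem
    have hu'' : u = u' := by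
      have := hmem
      rw [inv_mul_eq_one] at this
      exact this.symm
    refine ⟨hu'', ?_⟩
    have : u * v = u * v' := by rw [heq, hu'']
    exact mul_left_cancel this
  -- characterization of fibers
  have hHfib : ∀ x y : G, (y * x⁻¹ ∈ H ↔ uf y = uf x) := by
    intro x y
    constructor
    · intro h
      have heq : uf y * vf y = uf x * (y * x⁻¹ * vf x) := by
        rw [hmul y, mul_left_comm, hmul x, inv_mul_cancel_right]
      exact (huniq _ _ _ _ (hufP y) (hvfH y) (hufP x)
        (H.mul_mem h (hvfH x)) heq).1
    · intro h
      have : y * x⁻¹ = vf y * (vf x)⁻¹ := by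
        conv_lhs => rw [← hmul y, ← hmul x, h]
        rw [mul_inv, mul_mul_mul_comm, mul_inv_cancel, one_mul]
      rw [this]; exact H.mul_mem (hvfH y) (H.inv_mem (hvfH x))
  have hPfib : ∀ x y : G, (y * x⁻¹ ∈ P ↔ vf y = vf x) := by
    intro x y
    constructor
    · intro h
      have heq : uf y * vf y = (y * x⁻¹ * uf x) * vf x := by
        rw [hmul y, mul_assoc (y * x⁻¹), hmul x, inv_mul_cancel_right]
      exact (huniq _ _ _ _ (hufP y) (hvfH y) (P.mul_mem h (hufP x))
        (hvfH x) heq).2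
    · intro h
      have : y * x⁻¹ = uf y * (uf x)⁻¹ := by
        conv_lhs => rw [← hmul y, ← hmul x, h]
        rw [mul_inv, mul_mul_mul_comm, mul_inv_cancel, mul_one]
      rw [this]; exact P.mul_mem (hufP y) (P.inv_mem (hufP x))
  -- the projections are images
  have hXPim : XP = uf '' X := by
    ext u
    constructor
    · rintro ⟨hu, v, hv, huv⟩
      refine ⟨u * v, huv, ?_⟩
      exact (huniq _ _ _ _ (hufP (u * v)) (hvfH (u * v)) hu hv (hmul _)).1
    · rintro ⟨x, hx, rfl⟩
      exact ⟨hufP x, vf x, hvfH x, by rw [hmul x]; exact hx⟩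
  have hXHim : XH = vf '' X := by
    ext v
    constructor
    · rintro ⟨hv, u, hu, huv⟩
      refine ⟨u * v, huv, ?_⟩
      exact (huniq _ _ _ _ (hufP (u * v)) (hvfH (u * v)) hu hv (hmul _)).2
    · rintro ⟨x, hx, rfl⟩
      exact ⟨hvfH x, uf x, hufP x, by rw [hmul x]; exact hx⟩
  -- counting identities
  have hcount1 : X.ncard = lam * XP.ncard := by
    rw [hXPim]
    refine count_aux X uf lam (fun x hx => ?_)
    rw [← hlam x hx]
    congr 1
    ext y
    simp only [Set.mem_setOf_eq, hHfib x y]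
  have hcount2 : X.ncard = mu * XH.ncard := by
    rw [hXHim]
    refine count_aux X vf mu (fun x hx => ?_)
    rw [← hmu x hx]
    congr 1
    ext y
    simp only [Set.mem_setOf_eq, hPfib x y]
  -- XH.ncard divides lam
  obtain ⟨k, hk⟩ := hXP
  have hcop : (XH.ncard).Coprime (XP.ncard) := by
    rw [hk]
    exact Nat.Coprime.pow_right k hXH
  have hdvd : XH.ncard ∣ lam := by
    have h1 : XH.ncard ∣ lam * XP.ncard := by
      rw [← hcount1, hcount2]; exact dvd_mul_left _ mu
    exact (Nat.Coprime.dvd_of_dvd_mul_right hcop h1)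
  -- now prove the set equality
  ext a
  constructor
  · intro ha
    obtain ⟨u, hu, v, hv, huv⟩ := Subgroup.mem_sup.mp (hsup ▸ Subgroup.mem_top a)
    exact ⟨u, ⟨hu, v, hv, huv ▸ ha⟩, v, ⟨hv, u, hu, huv ▸ ha⟩, huv⟩
  · rintro ⟨u, ⟨huP, w, hwH, huwX⟩, v, ⟨hvH, z, hzP, hzvX⟩, rfl⟩
    -- x := u * w ∈ X; consider its H-fiber
    set x := u * w with hxdef
    have hxX : x ∈ X := huwX
    set F : Set G := {y ∈ X | y * x⁻¹ ∈ H} with hFdef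
    have hFlam : F.ncard = lam := hlam x hxX
    have hufx : uf x = u :=
      (huniq _ _ _ _ (hufP x) (hvfH x) huP hwH (hmul x)).1
    -- image of F under right multiplication by u⁻¹ sits inside XH
    have hsub : (fun y => y * u⁻¹) '' F ⊆ XH := by
      rintro _ ⟨y, ⟨hyX, hyH⟩, rfl⟩
      have huy : uf y = u := by rw [(hHfib x y).mp hyH, hufx]
      have hyu : y * u⁻¹ = vf y := by
        conv_lhs => rw [← hmul y, huy]
        rw [mul_comm u (vf y), mul_inv_cancel_right]
      show y * u⁻¹ ∈ XH
      rw [hyu]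
      exact ⟨hvfH y, uf y, hufP y, by rw [hmul y]; exact hyX⟩
    have hFcard : ((fun y => y * u⁻¹) '' F).ncard = lam := by
      rw [Set.ncard_image_of_injective F (mul_left_injective u⁻¹), hFlam]
    -- lam = XH.ncard
    have hlam_pos : 0 < lam := by
      rw [← hFlam]
      exact (Set.ncard_pos (Set.toFinite F)).mpr ⟨x, hxX, by simpa using H.one_mem⟩
    have hlam_le : lam ≤ XH.ncard := by
      rw [← hFcard]
      exact Set.ncard_le_ncard hsub (Set.toFinite XH)
    have hlam_eq : lam = XH.ncard :=
      le_antisymm hlam_le (Nat.le_of_dvd hlam_pos hdvd)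
    -- the image equals XH, so v is in the image
    have himeq : (fun y => y * u⁻¹) '' F = XH :=
      Set.eq_of_subset_of_ncard_le hsub (by rw [hFcard, hlam_eq])
    have hvXH : v ∈ XH := ⟨hvH, z, hzP, hzvX⟩
    rw [← himeq] at hvXH
    obtain ⟨y, ⟨hyX, _⟩, hyv⟩ := hvXH
    have hyv' : y * u⁻¹ = v := hyv
    have hy : y = u * v := by
      rw [← hyv', mul_comm u, inv_mul_cancel_right]
    show u * v ∈ X
    exact hy ▸ hyX
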